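/- Let G be a strongly connected finite directed graph without loops with sink s. For any vertex x ≠ s, as permutations of Rec(G) one has e_x^{d_x} = ∏_{y} e_y^{d_{xy}}, where d_{xy} is the number of edges from x to y and d_x = Σ_y d_{xy} is the out-degree of x. (Starting with d_x chips at x and letting each take one rotor-router step yields d_{xy} chips at each vertex y with the rotors returned to their original positions.) -/

import Mathlib

/-- A finite directed multigraph without loops, together with a distinguished
sink vertex and, for each vertex `x`, a cyclic ordering of the edges emanating
from `x`: the outgoing edges at `x` are indexed by `ZMod (deg x)` (in cyclic
order), and `head x e` is the target of the edge `e`. -/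
structure RotorGraph (V : Type*) [Fintype V] [DecidableEq V] where
  sink : V
  deg : V → ℕ
  deg_pos : ∀ x, 0 < deg x
  head : ∀ x : V, ZMod (deg x) → V
  no_loops : ∀ x e, head x e ≠ x

namespace RotorGraph

variable {V : Type*} [Fintype V] [DecidableEq V] (G : RotorGraph V)

/-- `x` is adjacent to `y` if some edge goes from `x` to `y`. -/
def Adj (x y : V) : Prop := ∃ e, G.head x e = y

/-- `G` is strongly connected: every vertex has a directed path to every vertex. -/
def StronglyConnected : Prop := ∀ x y : V, Relation.ReflTransGen G.Adj x y

/-- A rotor configuration: each vertex carries a rotor pointing along one of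
its outgoing edges.  (The value at the sink is irrelevant: it is never read
nor modified by the rotor-router walk.) -/
abbrev Conf := ∀ x : V, ZMod (G.deg x)

/-- One step of rotor-router walk for the state (rotor configuration, chip
location): if the chip is not at the sink, first increment the rotor at the
chip's location to the next edge in the cyclic ordering, then move the chip
along this new edge.  States whose chip is at the sink are absorbing. -/
def step (p : G.Conf × V) : G.Conf × V :=
  if p.2 = G.sink then p
  else (Function.update p.1 p.2 (p.1 p.2 + 1), G.head p.2 (p.1 p.2 + 1))

/-- The target of the rotor at `x`. -/
def next (T : G.Conf) (x : V) : V := G.head x (T x)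

/-- The rotors of `T` contain an oriented cycle all of whose vertices lie in `A`. -/
def HasCycleIn (T : G.Conf) (A : Set V) : Prop :=
  ∃ (m : ℕ) (x : V), 0 < m ∧ (∀ i < m, (G.next T)^[i] x ∈ A) ∧ (G.next T)^[m] x = x

/-- `T ∈ Rec(G)`: the rotors at the non-sink vertices form no oriented cycle,
i.e. they form an oriented spanning tree rooted at the sink. -/
def Rec (T : G.Conf) : Prop := ¬ G.HasCycleIn T {y | y ≠ G.sink}

/-- `e_x(T)`: start a chip at `x` and let it perform rotor-router walk until
it first reaches the sink; `chip x T` is the resulting rotor configuration. -/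
noncomputable def chip (x : V) (T : G.Conf) : G.Conf :=
  haveI := Classical.dec (∃ n, (G.step^[n] (T, x)).2 = G.sink)
  if h : ∃ n, (G.step^[n] (T, x)).2 = G.sink then (G.step^[Nat.find h] (T, x)).1 else T

/-- `d_{xy}`: the number of edges from `x` to `y`. -/
def edgeCount (x y : V) : ℕ :=
  haveI : NeZero (G.deg x) := ⟨(G.deg_pos x).ne'⟩
  (Finset.univ.filter fun e : ZMod (G.deg x) => G.head x e = y).card

end RotorGraph


set_option linter.unusedSectionVars false
set_option linter.unusedTactic false

namespace RotorGraph

variable {V : Type*} [Fintype V] [DecidableEq V] (G : RotorGraph V)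

/-! ### Multichip firing machinery -/

/-- A multichip state: a rotor configuration together with (integer) chip counts. -/
abbrev MState := G.Conf × (V → ℤ)

/-- Firing a chip at `v`: increment the rotor at `v`, move one chip from `v`
along the new rotor. -/
def fire (s : G.MState) (v : V) : G.MState :=
  (Function.update s.1 v (s.1 v + 1),
   fun u => s.2 u - (if u = v then 1 else 0)
     + (if u = G.head v (s.1 v + 1) then 1 else 0))

def fireList (s : G.MState) (l : List V) : G.MState := l.foldl G.fire s

def Legal : G.MState → List V → Prop
  | _, [] => True
  | s, v :: l => v ≠ G.sink ∧ 1 ≤ s.2 v ∧ Legal (G.fire s v) l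

/-- A terminal state: no chips outside the sink. -/
def Term (s : G.MState) : Prop := ∀ u, u ≠ G.sink → s.2 u ≤ 0

variable {G}

@[simp] lemma fireList_nil (s : G.MState) : G.fireList s [] = s := rfl

lemma fireList_cons (s : G.MState) (v : V) (l : List V) :
    G.fireList s (v :: l) = G.fireList (G.fire s v) l := rfl

lemma fireList_append (s : G.MState) (a b : List V) :
    G.fireList s (a ++ b) = G.fireList (G.fireList s a) b :=
  List.foldl_append ..

@[simp] lemma legal_nil (s : G.MState) : G.Legal s [] := trivial

lemma legal_cons {s : G.MState} {v : V} {l : List V} :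
    G.Legal s (v :: l) ↔ v ≠ G.sink ∧ 1 ≤ s.2 v ∧ G.Legal (G.fire s v) l := Iff.rfl

lemma fire_snd_mono (s : G.MState) (v : V) {u : V} (hu : u ≠ v) :
    s.2 u ≤ (G.fire s v).2 u := by
  simp only [fire, if_neg hu]
  split_ifs <;> omega

lemma fireList_snd_mono (s : G.MState) {l : List V} {u : V} (hu : u ∉ l) :
    s.2 u ≤ (G.fireList s l).2 u := by
  induction l generalizing s with
  | nil => exact le_rfl
  | cons w l ih =>
      rw [fireList_cons]
      exact le_trans (fire_snd_mono s w (fun h => hu (h ▸ List.mem_cons_self (a := w) (l := l))))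
        (ih _ (fun h => hu (List.mem_cons_of_mem _ h)))

lemma fire_comm {v w : V} (hvw : v ≠ w) (s : G.MState) :
    G.fire (G.fire s v) w = G.fire (G.fire s w) v := by
  have h1 : (G.fire s v).1 w = s.1 w := Function.update_of_ne (Ne.symm hvw) _ _
  have h2 : (G.fire s w).1 v = s.1 v := Function.update_of_ne hvw _ _
  refine Prod.ext ?_ ?_
  · show Function.update (G.fire s v).1 w ((G.fire s v).1 w + 1)
      = Function.update (G.fire s w).1 v ((G.fire s w).1 v + 1)
    rw [h1, h2]
    exact Function.update_comm hvw _ _ _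
  · funext u
    show (G.fire s v).2 u - _ + (if u = G.head w ((G.fire s v).1 w + 1) then (1:ℤ) else 0)
      = (G.fire s w).2 u - _ + (if u = G.head v ((G.fire s w).1 v + 1) then (1:ℤ) else 0)
    rw [h1, h2]
    simp only [fire]
    ring

lemma fireList_fire_comm {v : V} {l : List V} (hv : v ∉ l) (s : G.MState) :
    G.fireList (G.fire s v) l = G.fire (G.fireList s l) v := by
  induction l generalizing s with
  | nil => rfl
  | cons w l ih =>
      have hvw : v ≠ w := fun h => hv (h ▸ List.mem_cons_self (a := w) (l := l))
      rw [fireList_cons, fire_comm hvw, ih (fun h => hv (List.mem_cons_of_mem _ h)) (G.fire s w),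
        fireList_cons]

lemma legal_append {s : G.MState} {a b : List V} :
    G.Legal s (a ++ b) ↔ G.Legal s a ∧ G.Legal (G.fireList s a) b := by
  induction a generalizing s with
  | nil => simp
  | cons w l ih =>
      simp only [List.cons_append, legal_cons, fireList_cons, ih, and_assoc]

lemma legal_fire {s : G.MState} {l : List V} {v : V} (hl : G.Legal s l) (hv : v ∉ l) :
    G.Legal (G.fire s v) l := by
  induction l generalizing s with
  | nil => trivial
  | cons w l ih =>
      obtain ⟨h1, h2, h3⟩ := hl
      have hvw : v ≠ w := fun h => hv (h ▸ List.mem_cons_self (a := w) (l := l))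
      refine ⟨h1, le_trans h2 (fire_snd_mono s v (Ne.symm hvw)), ?_⟩
      rw [fire_comm hvw]
      exact ih h3 (fun h => hv (List.mem_cons_of_mem _ h))

lemma swap_first {s : G.MState} {v : V} {a b : List V}
    (hl : G.Legal s (a ++ v :: b)) (hv : v ∉ a) (hvs : v ≠ G.sink) (h1 : 1 ≤ s.2 v) :
    G.Legal s (v :: (a ++ b)) ∧
      G.fireList s (v :: (a ++ b)) = G.fireList s (a ++ v :: b) := by
  rw [legal_append] at hl
  obtain ⟨hla, hlv⟩ := hl
  rw [legal_cons] at hlv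
  obtain ⟨-, -, hlb⟩ := hlv
  constructor
  · refine ⟨hvs, h1, ?_⟩
    rw [legal_append]
    refine ⟨legal_fire hla hv, ?_⟩
    rw [fireList_fire_comm hv]
    exact hlb
  · rw [fireList_cons, fireList_append, fireList_fire_comm hv, fireList_append,
      fireList_cons]

lemma mem_split' {v : V} {l : List V} (h : v ∈ l) :
    ∃ a b, l = a ++ v :: b ∧ v ∉ a := by
  induction l with
  | nil => cases h
  | cons w l ih =>
      by_cases hvw : v = w
      · exact ⟨[], l, by simp [hvw], List.not_mem_nil (a := v)⟩
      · obtain ⟨a, b, rfl, ha⟩ := ih (by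
          rcases List.mem_cons.1 h with h' | h'
          · exact absurd h' hvw
          · exact h')
        exact ⟨w :: a, b, rfl, by
          simp only [List.mem_cons, not_or]
          exact ⟨hvw, ha⟩⟩

/-- The abelian property: any two legal firing sequences from the same state
that both end in terminal states have the same effect. -/
lemma abel : ∀ (n : ℕ) (s : G.MState) (a b : List V), a.length ≤ n →
    G.Legal s a → G.Term (G.fireList s a) →
    G.Legal s b → G.Term (G.fireList s b) →
    G.fireList s b = G.fireList s a := by
  intro n
  induction n with
  | zero =>
      intro s a b hlen hla hta hlb htb
      rw [Nat.le_zero, List.length_eq_zero_iff] at hlen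
      subst hlen
      rw [fireList_nil] at hta
      cases b with
      | nil => rfl
      | cons v l =>
          obtain ⟨hvs, h1, -⟩ := hlb
          exact absurd (hta v hvs) (by omega)
  | succ n ih =>
      intro s a b hlen hla hta hlb htb
      cases b with
      | nil =>
          rw [fireList_nil] at htb ⊢
          cases a with
          | nil => rfl
          | cons v l =>
              obtain ⟨hvs, h1, -⟩ := hla
              exact absurd (htb v hvs) (by omega)
      | cons v b' =>
          obtain ⟨hvs, h1, hlb'⟩ := hlb
          have hva : v ∈ a := by
            by_contra hva
            have := fireList_snd_mono s hva
            exact absurd (hta v hvs) (by omega)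
          obtain ⟨p, q, rfl, hp⟩ := mem_split' hva
          obtain ⟨hl', he'⟩ := swap_first hla hp hvs h1
          rw [legal_cons] at hl'
          obtain ⟨-, -, hl''⟩ := hl'
          have hta' : G.Term (G.fireList (G.fire s v) (p ++ q)) := by
            have : G.fireList (G.fire s v) (p ++ q) = G.fireList s (p ++ v :: q) := by
              rw [← he', fireList_cons]
            rw [this]; exact hta
          have hlen' : (p ++ q).length ≤ n := by
            simp only [List.length_append, List.length_cons] at hlen ⊢
            omega
          have := ih (G.fire s v) (p ++ q) b' hlen' hl'' hta' hlb'
            (by rw [← fireList_cons]; exact htb)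
          rw [fireList_cons, this, ← fireList_cons, he']

/-! ### Termination of the single-chip walk -/

lemma step_ne {T : G.Conf} {y : V} (hy : y ≠ G.sink) :
    G.step (T, y) = (Function.update T y (T y + 1), G.head y (T y + 1)) := by
  simp only [step, if_neg hy]

lemma terminates (hG : G.StronglyConnected) (T : G.Conf) (y : V) :
    ∃ n, (G.step^[n] (T, y)).2 = G.sink := by
  by_contra hcon
  push_neg at hcon
  set P : ℕ → G.Conf × V := fun n => G.step^[n] (T, y) with hPdef
  have hstep : ∀ n, P (n + 1) = G.step (P n) := fun n => Function.iterate_succ_apply' _ _ _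
  have hP0 : P 0 = (T, y) := rfl
  have hpos : ∀ n, (P n).2 ≠ G.sink := hcon
  have hP1 : ∀ n, (P (n+1)).1 = Function.update (P n).1 (P n).2 ((P n).1 (P n).2 + 1) := by
    intro n
    rw [hstep n, show G.step (P n) = G.step ((P n).1, (P n).2) from rfl, step_ne (hpos n)]
  have hP2 : ∀ n, (P (n+1)).2 = G.head (P n).2 ((P n).1 (P n).2 + 1) := by
    intro n
    rw [hstep n, show G.step (P n) = G.step ((P n).1, (P n).2) from rfl, step_ne (hpos n)]
  -- counting function
  set g : V → ℕ → ℕ := fun v n => ((Finset.range n).filter (fun k => (P k).2 = v)).card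
    with hgdef
  have hg0 : ∀ v, g v 0 = 0 := by intro v; simp [hgdef]
  have hgsucc : ∀ v n, g v (n+1) = g v n + (if (P n).2 = v then 1 else 0) := by
    intro v n
    simp only [hgdef, Finset.range_add_one, Finset.filter_insert]
    split_ifs with h
    · rw [Finset.card_insert_of_notMem (by simp)]
    · rw [add_zero]
  have hgmono : ∀ v, Monotone (g v) := by
    intro v
    apply monotone_nat_of_le_succ
    intro n
    rw [hgsucc]
    omega
  -- rotor invariant
  have hinv : ∀ n v, (P n).1 v = T v + (g v n : ZMod (G.deg v)) := by
    intro n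
    induction n with
    | zero => intro v; rw [hP0]; simp [hg0]
    | succ n ih =>
        intro v
        rw [hP1 n, hgsucc v n]
        by_cases hv : v = (P n).2
        · subst hv
          rw [Function.update_self, ih _, if_pos rfl]
          push_cast
          ring
        · rw [Function.update_of_ne hv, ih v, if_neg (fun h => hv h.symm), add_zero]
  -- pigeonhole: the trajectory is eventually periodic
  haveI hNZ : ∀ v : V, NeZero (G.deg v) := fun v => ⟨(G.deg_pos v).ne'⟩
  haveI : Finite G.Conf := by
    haveI : ∀ v : V, Fintype (ZMod (G.deg v)) := fun v => ZMod.fintype _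
    infer_instance
  obtain ⟨i0, j0, hne, heq⟩ := Finite.exists_ne_map_eq_of_infinite P
  obtain ⟨i, p, hpp, hiper⟩ : ∃ i p, 0 < p ∧ P (i + p) = P i := by
    rcases hne.lt_or_gt with h | h
    · exact ⟨i0, j0 - i0, by omega, by rw [show i0 + (j0 - i0) = j0 by omega]; exact heq.symm⟩
    · exact ⟨j0, i0 - j0, by omega, by rw [show j0 + (i0 - j0) = i0 by omega]; exact heq⟩
  have hper : ∀ n, i ≤ n → P (n + p) = P n := by
    intro n hn
    induction n, hn using Nat.le_induction with
    | base => exact hiper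
    | succ n hn ih =>
        rw [show n + 1 + p = (n + p) + 1 by omega, hstep, hstep, ih]
  -- the set of vertices visited at times ≥ i
  set A : Set V := {v | ∃ n, i ≤ n ∧ (P n).2 = v} with hAdef
  have hclosed : ∀ v w, v ∈ A → G.Adj v w → w ∈ A := by
    intro v w hv hvw
    obtain ⟨t, hti, htv⟩ := hv
    obtain ⟨e, he⟩ := hvw
    set m : ℕ := ((Finset.Ico t (t+p)).filter (fun k => (P k).2 = v)).card with hmdef
    have hm1 : 1 ≤ m := by
      apply Finset.card_pos.2
      exact ⟨t, Finset.mem_filter.2 ⟨Finset.mem_Ico.2 ⟨le_rfl, by omega⟩, htv⟩⟩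
    have hgadd : g v (t + p) = g v t + m := by
      have hsplit : Finset.range (t + p) = Finset.range t ∪ Finset.Ico t (t + p) := by
        rw [Finset.range_eq_Ico, Finset.range_eq_Ico,
          Finset.Ico_union_Ico_eq_Ico (Nat.zero_le t) (Nat.le_add_right t p)]
      simp only [hgdef, hmdef]
      rw [hsplit, Finset.filter_union, Finset.card_union_of_disjoint
        (Finset.disjoint_filter_filter
          (by rw [Finset.range_eq_Ico]; exact Finset.Ico_disjoint_Ico_consecutive 0 t (t+p)))]
    have hcast : (m : ZMod (G.deg v)) = 0 := by
      have h1 := hinv (t + p) v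
      have h2 := hinv t v
      rw [hper t hti, h2, hgadd] at h1
      have := add_left_cancel h1
      push_cast at this
      linear_combination -this
    have hdm : G.deg v ≤ m :=
      Nat.le_of_dvd hm1 ((ZMod.natCast_eq_zero_iff m (G.deg v)).1 hcast)
    -- find the time s ≥ t at which the rotor at v has the right value
    set j : ℕ := (e - T v - 1 - (g v t : ZMod (G.deg v))).val with hjdef
    have hjd : j < G.deg v := ZMod.val_lt _
    have hex : ∃ N, g v t + j + 1 ≤ g v N := ⟨t + p, by omega⟩
    set N := Nat.find hex with hNdef
    have hNs : g v t + j + 1 ≤ g v N := Nat.find_spec hex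
    have hN0 : N ≠ 0 := by
      intro h
      rw [h, hg0] at hNs
      omega
    set s := N - 1 with hsdef
    have hs1 : s + 1 = N := by omega
    have hgs : ¬ (g v t + j + 1 ≤ g v s) := Nat.find_min hex (by omega)
    have hstep' : g v (s+1) = g v s + (if (P s).2 = v then 1 else 0) := hgsucc v s
    rw [hs1] at hstep'
    have hPs : (P s).2 = v := by
      by_contra h
      rw [if_neg h, add_zero] at hstep'
      omega
    have hgsv : g v s = g v t + j := by
      rw [if_pos hPs] at hstep'
      omega
    have hst : t ≤ s := by
      by_contra h
      push_neg at h
      have h1 : g v (s+1) ≤ g v t := hgmono v (by omega)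
      rw [hs1] at h1
      omega
    refine ⟨s + 1, by omega, ?_⟩
    rw [hP2 s, hPs, hinv s v, hgsv, ← he]
    congr 1
    push_cast
    have : ((j : ℕ) : ZMod (G.deg v)) = e - T v - 1 - (g v t : ZMod (G.deg v)) := by
      rw [hjdef]
      exact ZMod.natCast_rightInverse _
    rw [this]
    ring
  have hsink : G.sink ∈ A := by
    have hrt := hG (P i).2 G.sink
    have : ∀ a b, Relation.ReflTransGen G.Adj a b → a ∈ A → b ∈ A := by
      intro a b hab
      induction hab with
      | refl => exact id
      | tail h1 h2 ih => exact fun ha => hclosed _ _ (ih ha) h2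
    exact this _ _ hrt ⟨i, le_rfl, rfl⟩
  obtain ⟨n, -, hn⟩ := hsink
  exact hpos n hn

/-! ### Relating the single-chip walk `chip` to multichip firing sequences -/

lemma chip_eq_of {T : G.Conf} {y : V} {n : ℕ}
    (hn : (G.step^[n] (T, y)).2 = G.sink)
    (hmin : ∀ m, m < n → (G.step^[m] (T, y)).2 ≠ G.sink) :
    G.chip y T = (G.step^[n] (T, y)).1 := by
  have h : ∃ k, (G.step^[k] (T, y)).2 = G.sink := ⟨n, hn⟩
  simp only [chip]
  rw [dif_pos h]
  have key : ∀ k : ℕ, k = n → (G.step^[k] (T, y)).1 = (G.step^[n] (T, y)).1 :=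
    fun k hk => by rw [hk]
  apply key
  exact le_antisymm (Nat.find_min' _ hn) ((Nat.le_find_iff _ _).2 hmin)

lemma chip_sink (T : G.Conf) : G.chip G.sink T = T :=
  chip_eq_of (n := 0) rfl (fun m hm => absurd hm (Nat.not_lt_zero m))

lemma chip_step {T : G.Conf} {y : V} (hy : y ≠ G.sink)
    (h : ∃ n, (G.step^[n] (T, y)).2 = G.sink) :
    G.chip y T = G.chip (G.head y (T y + 1)) (Function.update T y (T y + 1)) := by
  have hiter : ∀ m : ℕ, G.step^[m] (Function.update T y (T y + 1), G.head y (T y + 1))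
      = G.step^[m + 1] (T, y) := by
    intro m
    rw [Function.iterate_succ_apply, step_ne hy]
  have hN := Nat.find_spec h
  have hN0 : Nat.find h ≠ 0 := by
    intro h0
    rw [h0] at hN
    exact hy hN
  have e1 : Nat.find h - 1 + 1 = Nat.find h := by omega
  have h1 : G.chip y T = (G.step^[Nat.find h] (T, y)).1 :=
    chip_eq_of hN (fun m hm => Nat.find_min h hm)
  have h2 : G.chip (G.head y (T y + 1)) (Function.update T y (T y + 1))
      = (G.step^[Nat.find h - 1] (Function.update T y (T y + 1), G.head y (T y + 1))).1 := by
    apply chip_eq_of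
    · rw [hiter, e1]
      exact hN
    · intro m hm
      rw [hiter]
      exact Nat.find_min h (by omega)
  rw [h1, h2, hiter, e1]

/-- Single-chip run as a legal multichip firing sequence. -/
lemma corr : ∀ (N : ℕ) (T : G.Conf) (y : V) (χ : V → ℤ),
    (G.step^[N] (T, y)).2 = G.sink → (∀ u, 0 ≤ χ u) → 1 ≤ χ y →
    ∃ α, G.Legal (T, χ) α ∧ G.fireList (T, χ) α =
      (G.chip y T,
       fun u => χ u - (if u = y then 1 else 0) + (if u = G.sink then 1 else 0)) := by
  have base : ∀ (T : G.Conf) (χ : V → ℤ),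
      ∃ α, G.Legal (T, χ) α ∧ G.fireList (T, χ) α =
      (G.chip G.sink T,
       fun u => χ u - (if u = G.sink then 1 else 0) + (if u = G.sink then 1 else 0)) := by
    intro T χ
    refine ⟨[], trivial, ?_⟩
    rw [fireList_nil, chip_sink]
    refine Prod.ext rfl ?_
    funext u
    show χ u = _
    ring
  intro N
  induction N with
  | zero =>
      intro T y χ h0 hχ hχy
      have hy : y = G.sink := h0
      subst hy
      exact base T χ
  | succ N ih =>
      intro T y χ hstep hχ hχy
      by_cases hy : y = G.sink
      · subst hy
        exact base T χ
      · have hyne : G.head y (T y + 1) ≠ y := G.no_loops y _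
        have hfire : G.fire (T, χ) y = (Function.update T y (T y + 1),
            fun u => χ u - (if u = y then 1 else 0)
              + (if u = G.head y (T y + 1) then 1 else 0)) := rfl
        have hstep' : (G.step^[N] (Function.update T y (T y + 1),
            G.head y (T y + 1))).2 = G.sink := by
          rw [← step_ne hy, ← Function.iterate_succ_apply]
          exact hstep
        obtain ⟨α, hαL, hαE⟩ := ih (Function.update T y (T y + 1)) (G.head y (T y + 1))
          (fun u => χ u - (if u = y then 1 else 0)
            + (if u = G.head y (T y + 1) then 1 else 0))
          hstep'
          (by
            intro u
            by_cases hu : u = y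
            · subst hu
              rw [if_pos rfl]
              split_ifs <;> linarith
            · rw [if_neg hu]
              split_ifs <;> linarith [hχ u])
          (by
            rw [if_neg hyne, if_pos rfl]
            linarith [hχ (G.head y (T y + 1))])
        refine ⟨y :: α, ⟨hy, hχy, ?_⟩, ?_⟩
        · rw [hfire]
          exact hαL
        · rw [fireList_cons, hfire, hαE]
          refine Prod.ext ?_ ?_
          · exact (chip_step hy ⟨N + 1, hstep⟩).symm
          · funext u
            show χ u - _ + _ - _ + _ = χ u - _ + _
            ring

/-- Iterating `chip x` as a legal multichip firing sequence. -/
lemma iterexec (hG : G.StronglyConnected) (x : V) (hx : x ≠ G.sink) :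
    ∀ (k : ℕ) (T : G.Conf) (χ : V → ℤ),
    (∀ u, 0 ≤ χ u) → (k : ℤ) ≤ χ x →
    ∃ α, G.Legal (T, χ) α ∧ G.fireList (T, χ) α =
      ((fun S => G.chip x S)^[k] T,
       fun u => χ u - k * (if u = x then 1 else 0) + k * (if u = G.sink then 1 else 0)) := by
  intro k
  induction k with
  | zero =>
      intro T χ h0 h1
      refine ⟨[], trivial, ?_⟩
      rw [fireList_nil]
      refine Prod.ext rfl ?_
      funext u
      push_cast
      ring
  | succ k ih =>
      intro T χ hχ hk
      obtain ⟨N, hN⟩ := terminates hG T x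
      have hχx1 : 1 ≤ χ x := by
        have : ((k : ℤ) + 1) ≤ χ x := by push_cast at hk; linarith
        linarith [Int.natCast_nonneg k]
      obtain ⟨α₁, h1L, h1E⟩ := corr N T x χ hN hχ hχx1
      obtain ⟨α₂, h2L, h2E⟩ := ih (G.chip x T)
        (fun u => χ u - (if u = x then 1 else 0) + (if u = G.sink then 1 else 0))
        (by
          intro u
          by_cases hu : u = x
          · subst hu
            rw [if_pos rfl]
            split_ifs <;> linarith
          · rw [if_neg hu]
            split_ifs <;> linarith [hχ u])
        (by
          rw [if_pos rfl, if_neg hx]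
          push_cast at hk
          linarith)
      refine ⟨α₁ ++ α₂, ?_, ?_⟩
      · rw [legal_append]
        refine ⟨h1L, ?_⟩
        rw [h1E]
        exact h2L
      · rw [fireList_append, h1E, h2E]
        refine Prod.ext ?_ ?_
        · exact (Function.iterate_succ_apply _ _ _).symm
        · funext u
          show χ u - _ + _ - _ + _ = χ u - _ + _
          push_cast
          ring

/-- Folding `chip` over a list as a legal multichip firing sequence. -/
lemma foldexec (hG : G.StronglyConnected) :
    ∀ (L : List V) (T : G.Conf) (χ : V → ℤ),
    (∀ u, 0 ≤ χ u) → (∀ u, (L.count u : ℤ) ≤ χ u) →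
    ∃ α, G.Legal (T, χ) α ∧ G.fireList (T, χ) α =
      (L.foldl (fun S y => G.chip y S) T,
       fun u => χ u - L.count u + L.length * (if u = G.sink then 1 else 0)) := by
  intro L
  induction L with
  | nil =>
      intro T χ h0 h1
      refine ⟨[], trivial, ?_⟩
      rw [fireList_nil]
      refine Prod.ext rfl ?_
      funext u
      simp
  | cons y L ih =>
      intro T χ hχ hcount
      have hcc : ∀ u, (y :: L).count u = L.count u + if u = y then 1 else 0 := by
        intro u
        by_cases hu : u = y
        · subst hu
          rw [if_pos rfl, List.count_cons_self]
        · rw [if_neg hu, List.count_cons_of_ne (Ne.symm hu), add_zero]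
      obtain ⟨N, hN⟩ := terminates hG T y
      have hy1 : 1 ≤ χ y := by
        have h1 := hcount y
        rw [hcc y, if_pos rfl] at h1
        push_cast at h1
        linarith [Int.natCast_nonneg (L.count y)]
      obtain ⟨α₁, h1L, h1E⟩ := corr N T y χ hN hχ hy1
      obtain ⟨α₂, h2L, h2E⟩ := ih (G.chip y T)
        (fun u => χ u - (if u = y then 1 else 0) + (if u = G.sink then 1 else 0))
        (by
          intro u
          by_cases hu : u = y
          · subst hu
            rw [if_pos rfl]
            split_ifs <;> linarith
          · rw [if_neg hu]
            split_ifs <;> linarith [hχ u])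
        (by
          intro u
          have h1 := hcount u
          rw [hcc u] at h1
          push_cast at h1
          split_ifs at h1 ⊢ <;> linarith)
      refine ⟨α₁ ++ α₂, ?_, ?_⟩
      · rw [legal_append]
        refine ⟨h1L, ?_⟩
        rw [h1E]
        exact h2L
      · rw [fireList_append, h1E, h2E]
        refine Prod.ext rfl ?_
        funext u
        show χ u - _ + _ - _ + _ = χ u - _ + _
        rw [hcc u]
        push_cast
        simp only [List.length_cons]
        push_cast
        ring

/-- One full rotation of the rotor at `x`. -/
lemma card_rotation (x : V) (T : G.Conf) (u : V) :
    ((Finset.range (G.deg x)).filter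
      (fun i : ℕ => G.head x (T x + (i : ZMod (G.deg x)) + 1) = u)).card = G.edgeCount x u := by
  haveI : NeZero (G.deg x) := ⟨(G.deg_pos x).ne'⟩
  rw [edgeCount]
  refine Finset.card_bij' (fun i _ => T x + (i : ZMod (G.deg x)) + 1)
    (fun e _ => (e - T x - 1).val) ?_ ?_ ?_ ?_
  · intro a ha
    exact Finset.mem_filter.2 ⟨Finset.mem_univ _, (Finset.mem_filter.1 ha).2⟩
  · intro e he
    refine Finset.mem_filter.2 ⟨Finset.mem_range.2 (ZMod.val_lt _), ?_⟩
    rw [show (((e - T x - 1).val : ℕ) : ZMod (G.deg x)) = e - T x - 1 from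
      ZMod.natCast_rightInverse _]
    rw [show T x + (e - T x - 1) + 1 = e from by ring]
    exact (Finset.mem_filter.1 he).2
  · intro a ha
    rw [show T x + (a : ZMod (G.deg x)) + 1 - T x - 1 = (a : ZMod (G.deg x)) from by ring]
    exact ZMod.val_cast_of_lt (Finset.mem_range.1 (Finset.mem_filter.1 ha).1)
  · intro e he
    rw [show (((e - T x - 1).val : ℕ) : ZMod (G.deg x)) = e - T x - 1 from
      ZMod.natCast_rightInverse _]
    ring

/-- Firing `x` exactly `j` times in a row. -/
lemma repexec (x : V) (hx : x ≠ G.sink) (T : G.Conf) :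
    ∀ j, j ≤ G.deg x →
    G.Legal (T, fun u => (G.deg x : ℤ) * (if u = x then 1 else 0)) (List.replicate j x) ∧
    G.fireList (T, fun u => (G.deg x : ℤ) * (if u = x then 1 else 0)) (List.replicate j x) =
      (Function.update T x (T x + (j : ZMod (G.deg x))),
       fun u => (G.deg x : ℤ) * (if u = x then 1 else 0) - j * (if u = x then 1 else 0)
         + (((Finset.range j).filter
             (fun i : ℕ => G.head x (T x + (i : ZMod (G.deg x)) + 1) = u)).card : ℤ)) := by
  intro j
  induction j with
  | zero =>
      intro _
      refine ⟨trivial, ?_⟩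
      rw [List.replicate_zero, fireList_nil]
      refine Prod.ext ?_ ?_
      · show T = Function.update T x (T x + ((0 : ℕ) : ZMod (G.deg x)))
        rw [Nat.cast_zero, add_zero, Function.update_eq_self]
      · funext u
        simp
  | succ j ih =>
      intro hj1
      have hj : j < G.deg x := hj1
      obtain ⟨ihL, ihE⟩ := ih (by omega)
      have hcard0 : ((Finset.range j).filter
          (fun i : ℕ => G.head x (T x + (i : ZMod (G.deg x)) + 1) = x)).card = 0 := by
        rw [Finset.card_eq_zero, Finset.filter_eq_empty_iff]
        exact fun i _ => G.no_loops x _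
      have hSx : (G.fireList (T, fun u => (G.deg x : ℤ) * (if u = x then 1 else 0))
          (List.replicate j x)).2 x = (G.deg x : ℤ) - j := by
        rw [ihE]
        dsimp only
        rw [if_pos rfl, hcard0]
        push_cast
        ring
      have hcard : ∀ u, ((Finset.range (j+1)).filter
          (fun i : ℕ => G.head x (T x + (i : ZMod (G.deg x)) + 1) = u)).card
          = ((Finset.range j).filter
            (fun i : ℕ => G.head x (T x + (i : ZMod (G.deg x)) + 1) = u)).card
            + if G.head x (T x + (j : ZMod (G.deg x)) + 1) = u then 1 else 0 := by
        intro u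
        rw [Finset.range_add_one, Finset.filter_insert]
        split_ifs with h
        · rw [Finset.card_insert_of_notMem (by simp)]
        · rw [add_zero]
      constructor
      · rw [List.replicate_succ', legal_append]
        refine ⟨ihL, ?_⟩
        refine ⟨hx, ?_, trivial⟩
        rw [hSx]
        have : (j : ℤ) < (G.deg x : ℤ) := by exact_mod_cast hj
        linarith
      · rw [List.replicate_succ', fireList_append, ihE]
        refine Prod.ext ?_ ?_
        · show Function.update (Function.update T x (T x + (j : ZMod (G.deg x)))) x
            (Function.update T x (T x + (j : ZMod (G.deg x))) x + 1) = _
          rw [Function.update_self, Function.update_idem]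
          congr 1
          push_cast
          ring
        · funext u
          rw [fireList_cons, fireList_nil]
          simp only [fire]
          simp only [Function.update_self]
          rw [hcard u]
          push_cast
          rw [show (if u = G.head x (T x + (j : ZMod (G.deg x)) + 1) then (1:ℤ) else 0)
            = (if G.head x (T x + (j : ZMod (G.deg x)) + 1) = u then (1:ℤ) else 0) from by
              simp [eq_comm]]
          ring

end RotorGraph

/-- As permutations of `Rec(G)`, `e_x^{d_x} = ∏_y e_y^{d_{xy}}`: applying
`e_x` exactly `d_x` times to a configuration `T ∈ Rec(G)` has the same effect
as applying, for every vertex `y`, the operator `e_y` exactly `d_{xy}` times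
(in any order, here recorded as a list `L` containing each `y` with
multiplicity `d_{xy}`). -/
theorem stmt5 {V : Type*} [Fintype V] [DecidableEq V] (G : RotorGraph V)
    (hG : G.StronglyConnected) (x : V) (hx : x ≠ G.sink)
    (T : G.Conf) (hT : G.Rec T)
    (L : List V) (hL : ∀ y : V, L.count y = G.edgeCount x y) :
    (fun S => G.chip x S)^[G.deg x] T = L.foldl (fun S y => G.chip y S) T := by
  classical
  -- Execution A: run `chip x` exactly `deg x` times.
  obtain ⟨α, hαL, hαE⟩ := RotorGraph.iterexec hG x hx (G.deg x) T
    (fun u => (G.deg x : ℤ) * (if u = x then 1 else 0))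
    (by intro u; split_ifs <;> simp)
    (by simp)
  have hαT : G.Term (G.fireList (T, fun u => (G.deg x : ℤ) * (if u = x then 1 else 0)) α) := by
    rw [hαE]
    intro u hu
    dsimp only
    rw [if_neg hu, mul_zero, add_zero]
    simp
  -- Execution B: first fire `x` exactly `deg x` times, then route the chips per `L`.
  obtain ⟨hrL, hrE⟩ := RotorGraph.repexec x hx T (G.deg x) le_rfl
  have hrE' : G.fireList (T, fun u => (G.deg x : ℤ) * (if u = x then 1 else 0))
      (List.replicate (G.deg x) x) = (T, fun u => (G.edgeCount x u : ℤ)) := by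
    rw [hrE]
    refine Prod.ext ?_ ?_
    · show Function.update T x (T x + ((G.deg x : ℕ) : ZMod (G.deg x))) = T
      rw [ZMod.natCast_self, add_zero, Function.update_eq_self]
    · funext u
      dsimp only
      rw [RotorGraph.card_rotation]
      ring
  obtain ⟨β, hβL, hβE⟩ := RotorGraph.foldexec hG L T (fun u => (G.edgeCount x u : ℤ))
    (fun u => Int.natCast_nonneg _)
    (fun u => by exact_mod_cast (hL u).le)
  have hBE : G.fireList (T, fun u => (G.deg x : ℤ) * (if u = x then 1 else 0))
      (List.replicate (G.deg x) x ++ β)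
      = (L.foldl (fun S y => G.chip y S) T,
         fun u => (G.edgeCount x u : ℤ) - L.count u
           + L.length * (if u = G.sink then 1 else 0)) := by
    rw [RotorGraph.fireList_append, hrE', hβE]
  have hBL : G.Legal (T, fun u => (G.deg x : ℤ) * (if u = x then 1 else 0))
      (List.replicate (G.deg x) x ++ β) := by
    rw [RotorGraph.legal_append]
    exact ⟨hrL, by rw [hrE']; exact hβL⟩
  have hBT : G.Term (G.fireList (T, fun u => (G.deg x : ℤ) * (if u = x then 1 else 0))
      (List.replicate (G.deg x) x ++ β)) := by
    rw [hBE]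
    intro u hu
    dsimp only
    rw [if_neg hu, mul_zero, add_zero, hL u]
    simp
  have key := RotorGraph.abel α.length
    (T, fun u => (G.deg x : ℤ) * (if u = x then 1 else 0))
    α (List.replicate (G.deg x) x ++ β) le_rfl hαL hαT hBL hBT
  rw [hαE, hBE] at key
  exact (congrArg Prod.fst key).symm
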